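/- Let 𝒪 be the ring of integers of an imaginary quadratic field F, and let a, b ∈ 𝒪 with a𝒪 + b𝒪 = 𝒪. Then there exists x ∈ 𝒪 such that a + xb is not divisible in 𝒪 by any natural number n > 1. -/

import Mathlib

noncomputable section

/-- ω = (d + √d)/2 where √d = i·√(-d) for the discriminant d < 0. -/
def omg (d : ℤ) : ℂ := ((d : ℂ) + Complex.I * (Real.sqrt (-(d : ℝ)) : ℝ)) / 2

/-- d is the discriminant of an imaginary quadratic field. -/
def IsDisc (d : ℤ) : Prop :=
  d < 0 ∧ ((d % 4 = 1 ∧ Squarefree d) ∨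
    (d % 4 = 0 ∧ Squarefree (d / 4) ∧ (d / 4 % 4 = 2 ∨ d / 4 % 4 = 3)))

/-- The ring of integers 𝒪 = ℤ + ℤω of the imaginary quadratic field of
discriminant d, as a subset of ℂ. -/
def Oint (d : ℤ) : Set ℂ := {z | ∃ a b : ℤ, z = (a : ℂ) + (b : ℂ) * omg d}

/-- Q is a nonzero ideal of 𝒪. -/
def IsIdealOf (d : ℤ) (Q : Set ℂ) : Prop :=
  Q ⊆ Oint d ∧ (0 : ℂ) ∈ Q ∧ (∃ q ∈ Q, q ≠ 0) ∧
    (∀ x ∈ Q, ∀ y ∈ Q, x + y ∈ Q) ∧ (∀ r ∈ Oint d, ∀ q ∈ Q, r * q ∈ Q)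

/- ## Auxiliary lemmas -/

lemma omg_sq (d e : ℤ) (hd : d < 0) (he : d^2 - d = 4*e) :
    (omg d)^2 = (d:ℂ) * omg d - (e:ℂ) := by
  have h0 : Real.sqrt (-(d:ℝ)) ^ 2 = -(d:ℝ) :=
    Real.sq_sqrt (by exact_mod_cast neg_nonneg.mpr hd.le)
  have hs : ((Real.sqrt (-(d:ℝ)) : ℝ) : ℂ)^2 = -(d:ℂ) := by
    rw [← Complex.ofReal_pow, h0]; push_cast; ring
  have he' : (d:ℂ)^2 - d = 4*e := by exact_mod_cast congrArg (Int.cast : ℤ → ℂ) he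
  unfold omg
  linear_combination (Complex.I^2/4) * hs - ((d:ℂ)/4) * Complex.I_sq - (1/4) * he'

lemma coords_zero (d : ℤ) (hd : d < 0) (u v : ℤ)
    (h : (u:ℂ) + (v:ℂ) * omg d = 0) : u = 0 ∧ v = 0 := by
  have hspos : 0 < Real.sqrt (-(d:ℝ)) := Real.sqrt_pos.mpr (by exact_mod_cast neg_pos.mpr hd)
  have him := congrArg Complex.im h
  have hre := congrArg Complex.re h
  simp [omg, Complex.add_im, Complex.add_re, Complex.mul_im, Complex.mul_re,
    Complex.div_im, Complex.div_re, Complex.I_im, Complex.I_re] at him hre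
  have hv : v = 0 := by
    rcases him with h' | h'
    · exact h'
    · exact absurd h' hspos.ne'
  subst hv
  refine ⟨?_, rfl⟩
  simp at hre
  exact_mod_cast hre

lemma coords_unique (d : ℤ) (hd : d < 0) (u v u' v' : ℤ)
    (h : (u:ℂ) + (v:ℂ) * omg d = (u':ℂ) + (v':ℂ) * omg d) : u = u' ∧ v = v' := by
  have h0 : ((u - u' : ℤ):ℂ) + ((v - v' : ℤ):ℂ) * omg d = 0 := by
    push_cast; linear_combination h
  obtain ⟨h1, h2⟩ := coords_zero d hd _ _ h0
  omega

lemma mul_coords (d e : ℤ) (hd : d < 0) (he : d^2 - d = 4*e) (x1 x2 b1 b2 : ℤ) :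
    ((x1:ℂ) + (x2:ℂ) * omg d) * ((b1:ℂ) + (b2:ℂ) * omg d)
      = ((x1*b1 - e*x2*b2 : ℤ) : ℂ) + ((x1*b2 + x2*b1 + d*x2*b2 : ℤ):ℂ) * omg d := by
  push_cast
  linear_combination ((x2:ℂ)*(b2:ℂ)) * omg_sq d e hd he

lemma mem_mul (d e : ℤ) (hd : d < 0) (he : d^2 - d = 4*e) {z w : ℂ}
    (hz : z ∈ Oint d) (hw : w ∈ Oint d) : z * w ∈ Oint d := by
  obtain ⟨z1, z2, rfl⟩ := hz
  obtain ⟨w1, w2, rfl⟩ := hw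
  exact ⟨_, _, mul_coords d e hd he z1 z2 w1 w2⟩

lemma mem_add (d : ℤ) {z w : ℂ} (hz : z ∈ Oint d) (hw : w ∈ Oint d) :
    z + w ∈ Oint d := by
  obtain ⟨z1, z2, rfl⟩ := hz
  obtain ⟨w1, w2, rfl⟩ := hw
  exact ⟨z1 + w1, z2 + w2, by push_cast; ring⟩

open Finset in
lemma core (a1 a2 c1 c2 : ℤ) (hD : a1 * c2 - a2 * c1 ≠ 0)
    (hcop : ∀ p : ℕ, p.Prime → ¬((p:ℤ) ∣ a1 ∧ (p:ℤ) ∣ a2 ∧ (p:ℤ) ∣ c1 ∧ (p:ℤ) ∣ c2)) :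
    ∃ t : ℤ, IsCoprime (a1 + t * c1) (a2 + t * c2) := by
  classical
  set D : ℕ := (a1 * c2 - a2 * c1).natAbs with hDdef
  have hDpos : D ≠ 0 := by simpa [hDdef, Int.natAbs_eq_zero] using hD
  set S : Finset ℕ := D.primeFactors.filter (fun p => ¬((p:ℤ) ∣ a1 ∧ (p:ℤ) ∣ a2)) with hS
  refine ⟨(∏ p ∈ S, (p:ℤ)), ?_⟩
  set t : ℤ := ∏ p ∈ S, (p:ℤ) with ht
  rw [Int.isCoprime_iff_gcd_eq_one]
  by_contra hg
  obtain ⟨q, hq, hqd⟩ := Nat.exists_prime_and_dvd hg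
  have hq1 : (q:ℤ) ∣ a1 + t * c1 := (Int.natCast_dvd_natCast.mpr hqd).trans (Int.gcd_dvd_left _ _)
  have hq2 : (q:ℤ) ∣ a2 + t * c2 := (Int.natCast_dvd_natCast.mpr hqd).trans (Int.gcd_dvd_right _ _)
  have hqint : Prime (q:ℤ) := Nat.prime_iff_prime_int.mp hq
  have hqD : (q:ℤ) ∣ a1 * c2 - a2 * c1 := by
    have h : a1 * c2 - a2 * c1 = c2 * (a1 + t * c1) - c1 * (a2 + t * c2) := by ring
    rw [h]; exact dvd_sub (hq1.mul_left c2) (hq2.mul_left c1)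
  have hqDF : q ∈ D.primeFactors := by
    rw [Nat.mem_primeFactors]
    refine ⟨hq, ?_, hDpos⟩
    have : (q:ℤ) ∣ (D:ℤ) := Int.dvd_natAbs.mpr hqD
    exact_mod_cast this
  by_cases hqa : (q:ℤ) ∣ a1 ∧ (q:ℤ) ∣ a2
  · have hqt : ¬ (q:ℤ) ∣ t := by
      intro hdvd
      obtain ⟨p, hp, hqp⟩ := hqint.exists_mem_finset_dvd hdvd
      have hpS := hp
      rw [hS, mem_filter] at hpS
      have hpprime : p.Prime := Nat.prime_of_mem_primeFactors hpS.1
      have hqeq : q = p :=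
        (Nat.prime_dvd_prime_iff_eq hq hpprime).mp (Int.natCast_dvd_natCast.mp hqp)
      exact hpS.2 (hqeq ▸ hqa)
    have hnc : ¬((q:ℤ) ∣ c1 ∧ (q:ℤ) ∣ c2) := fun h => hcop q hq ⟨hqa.1, hqa.2, h.1, h.2⟩
    rcases not_and_or.mp hnc with hc | hc
    · have h : (q:ℤ) ∣ t * c1 := by
        have := dvd_sub hq1 hqa.1; simpa using this
      rcases hqint.dvd_mul.mp h with h | h
      · exact hqt h
      · exact hc h
    · have h : (q:ℤ) ∣ t * c2 := by
        have := dvd_sub hq2 hqa.2; simpa using this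
      rcases hqint.dvd_mul.mp h with h | h
      · exact hqt h
      · exact hc h
  · have hqS : q ∈ S := by rw [hS, mem_filter]; exact ⟨hqDF, hqa⟩
    have hqt : (q:ℤ) ∣ t := dvd_prod_of_mem _ hqS
    apply hqa
    constructor
    · have := dvd_sub hq1 (hqt.mul_right c1); simpa using this
    · have := dvd_sub hq2 (hqt.mul_right c2); simpa using this

/-- An element of 𝒪 with coprime coordinates is not divisible by any n > 1. -/
lemma notdiv (d : ℤ) (hd : d < 0) (z1 z2 : ℤ) (hco : IsCoprime z1 z2) :
    ∀ n : ℕ, 1 < n → ¬ ∃ y ∈ Oint d, ((z1:ℂ) + (z2:ℂ) * omg d) = (n:ℂ) * y := by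
  rintro n hn ⟨y, ⟨y1, y2, rfl⟩, heq⟩
  have h : (z1:ℂ) + (z2:ℂ) * omg d = (((n:ℤ)*y1 : ℤ):ℂ) + (((n:ℤ)*y2 : ℤ):ℂ) * omg d := by
    push_cast
    linear_combination heq
  obtain ⟨h1, h2⟩ := coords_unique d hd _ _ _ _ h
  have hdvd1 : (n:ℤ) ∣ z1 := ⟨y1, h1⟩
  have hdvd2 : (n:ℤ) ∣ z2 := ⟨y2, h2⟩
  have hu : IsUnit ((n:ℤ)) := hco.isUnit_of_dvd' hdvd1 hdvd2
  rcases Int.isUnit_iff.mp hu with h | h <;> omega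

/-- main auxiliary step -/
lemma mainaux (d e : ℤ) (hdneg : d < 0) (he : d^2 - d = 4*e)
    (a b x0 y0 : ℂ) (hx0 : x0 ∈ Oint d) (hy0 : y0 ∈ Oint d) (hab1 : a * x0 + b * y0 = 1)
    (A1 A2 : ℤ) (haco : a = (A1:ℂ) + (A2:ℂ) * omg d)
    (w : ℂ) (w1 w2 : ℤ) (hwco : w = (w1:ℂ) + (w2:ℂ) * omg d)
    (hwnd : ∀ p : ℕ, p.Prime → ¬((p:ℤ) ∣ w1 ∧ (p:ℤ) ∣ w2))
    (c1 c2 : ℤ) (hwb : w * b = (c1:ℂ) + (c2:ℂ) * omg d)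
    (hD : A1 * c2 - A2 * c1 ≠ 0) :
    ∃ x ∈ Oint d, ∀ n : ℕ, 1 < n → ¬ ∃ y ∈ Oint d, a + x * b = (n : ℂ) * y := by
  have hwO : w ∈ Oint d := ⟨w1, w2, hwco⟩
  have hcop : ∀ p : ℕ, p.Prime → ¬((p:ℤ) ∣ A1 ∧ (p:ℤ) ∣ A2 ∧ (p:ℤ) ∣ c1 ∧ (p:ℤ) ∣ c2) := by
    rintro p hp ⟨⟨A1', hA1⟩, ⟨A2', hA2⟩, ⟨c1', hc1⟩, ⟨c2', hc2⟩⟩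
    -- w = a * (w * x0) + (w * b) * y0 = p * u
    have hwx0 : w * x0 ∈ Oint d := mem_mul d e hdneg he hwO hx0
    obtain ⟨s1, s2, hs⟩ := hwx0
    -- a * (w*x0) = p * ((A1' + A2' ω)(s1 + s2 ω))
    have hu1 : ((A1':ℂ) + (A2':ℂ) * omg d) * ((s1:ℂ) + (s2:ℂ) * omg d) ∈ Oint d :=
      mem_mul d e hdneg he ⟨A1', A2', rfl⟩ ⟨s1, s2, rfl⟩
    have hu2 : ((c1':ℂ) + (c2':ℂ) * omg d) * y0 ∈ Oint d :=
      mem_mul d e hdneg he ⟨c1', c2', rfl⟩ hy0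
    obtain ⟨u1, u2, hu⟩ := mem_add d hu1 hu2
    have hw_eq : (w1:ℂ) + (w2:ℂ) * omg d = (((p:ℤ)*u1 : ℤ):ℂ) + (((p:ℤ)*u2 : ℤ):ℂ) * omg d := by
      have expand : (w1:ℂ) + (w2:ℂ) * omg d = a * (w * x0) + (w * b) * y0 := by
        rw [← hwco]
        calc w = w * (a * x0 + b * y0) := by rw [hab1, mul_one]
        _ = a * (w * x0) + (w * b) * y0 := by ring
      have hA1' : (A1:ℂ) = p * A1' := by exact_mod_cast congrArg (Int.cast : ℤ → ℂ) hA1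
      have hA2' : (A2:ℂ) = p * A2' := by exact_mod_cast congrArg (Int.cast : ℤ → ℂ) hA2
      have hc1' : (c1:ℂ) = p * c1' := by exact_mod_cast congrArg (Int.cast : ℤ → ℂ) hc1
      have hc2' : (c2:ℂ) = p * c2' := by exact_mod_cast congrArg (Int.cast : ℤ → ℂ) hc2
      push_cast
      rw [expand, haco, hs, hwb, hA1', hA2', hc1', hc2']
      linear_combination (p:ℂ) * hu
    obtain ⟨h1, h2⟩ := coords_unique d hdneg _ _ _ _ hw_eq
    exact hwnd p hp ⟨⟨u1, h1⟩, ⟨u2, h2⟩⟩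
  obtain ⟨t, hco⟩ := core A1 A2 c1 c2 hD hcop
  refine ⟨(t:ℂ) * w, ⟨t*w1, t*w2, by rw [hwco]; push_cast; ring⟩, ?_⟩
  intro n hn hex
  apply notdiv d hdneg (A1 + t*c1) (A2 + t*c2) hco n hn
  obtain ⟨y, hy, heq⟩ := hex
  refine ⟨y, hy, ?_⟩
  rw [← heq, haco]
  have : (t:ℂ) * w * b = (t:ℂ) * ((c1:ℂ) + (c2:ℂ) * omg d) := by
    rw [← hwb]; ring
  rw [this]
  push_cast
  ring

/-- if a𝒪 + b𝒪 = 𝒪 then some a + xb is not divisible by any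
natural number > 1. -/
theorem stmt17 (d : ℤ) (hd : IsDisc d) (a b : ℂ)
    (ha : a ∈ Oint d) (hb : b ∈ Oint d)
    (hcop : ∃ x ∈ Oint d, ∃ y ∈ Oint d, a * x + b * y = 1) :
    ∃ x ∈ Oint d, ∀ n : ℕ, 1 < n → ¬ ∃ y ∈ Oint d, a + x * b = (n : ℂ) * y := by
  obtain ⟨hdneg, hmod⟩ := hd
  have hd4 : d % 4 = 0 ∨ d % 4 = 1 := by tauto
  obtain ⟨e, he⟩ : ∃ e : ℤ, d^2 - d = 4*e := by
    obtain ⟨k, hk⟩ : ∃ k : ℤ, d = 4*k ∨ d = 4*k+1 := ⟨d / 4, by omega⟩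
    rcases hk with hk | hk
    · exact ⟨4*k^2 - k, by rw [hk]; ring⟩
    · exact ⟨k*(4*k+1), by rw [hk]; ring⟩
  obtain ⟨x0, hx0, y0, hy0, hab1⟩ := hcop
  have hone : ∀ p : ℕ, p.Prime → ¬((p:ℤ) ∣ (1:ℤ) ∧ (p:ℤ) ∣ (0:ℤ)) := by
    rintro p hp ⟨h1, -⟩
    have : (p:ℤ) = 1 ∨ (p:ℤ) = -1 := Int.isUnit_iff.mp (isUnit_of_dvd_one h1)
    have hp2 := hp.two_le
    omega
  have honeω : ∀ p : ℕ, p.Prime → ¬((p:ℤ) ∣ (0:ℤ) ∧ (p:ℤ) ∣ (1:ℤ)) := by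
    rintro p hp ⟨-, h1⟩
    have : (p:ℤ) = 1 ∨ (p:ℤ) = -1 := Int.isUnit_iff.mp (isUnit_of_dvd_one h1)
    have hp2 := hp.two_le
    omega
  by_cases hb0 : b = 0
  · -- a * x0 = 1 ; take x = 0
    have hax0 : a * x0 = 1 := by rw [hb0] at hab1; simpa using hab1
    refine ⟨0, ⟨0, 0, by simp⟩, ?_⟩
    intro n hn ⟨y, hy, heq⟩
    apply notdiv d hdneg 1 0 isCoprime_one_left n hn
    refine ⟨y * x0, mem_mul d e hdneg he hy hx0, ?_⟩
    have : a = (n:ℂ) * y := by rw [← heq]; ring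
    push_cast
    calc (1:ℂ) + 0 * omg d = a * x0 := by rw [hax0]; ring
    _ = (n:ℂ) * (y * x0) := by rw [this]; ring
  by_cases ha0 : a = 0
  · -- b * y0 = 1 ; take x = y0
    have hby0 : b * y0 = 1 := by rw [ha0] at hab1; simpa using hab1
    refine ⟨y0, hy0, ?_⟩
    intro n hn ⟨y, hy, heq⟩
    apply notdiv d hdneg 1 0 isCoprime_one_left n hn
    refine ⟨y, hy, ?_⟩
    have h1 : (1:ℂ) = (n:ℂ) * y := by
      rw [← heq, ha0, zero_add, mul_comm y0 b, hby0]
    push_cast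
    rw [← h1]; ring
  -- main case
  obtain ⟨A1, A2, haco⟩ := ha
  obtain ⟨B1, B2, hbco⟩ := hb
  by_cases hD1 : A1 * B2 - A2 * B1 ≠ 0
  · exact mainaux d e hdneg he a b x0 y0 hx0 hy0 hab1 A1 A2 haco
      1 1 0 (by simp) hone B1 B2 (by rw [one_mul, hbco]) hD1
  · have hωb : (omg d) * b = ((-(e*B2) : ℤ):ℂ) + ((B1 + d*B2 : ℤ):ℂ) * omg d := by
      have h := mul_coords d e hdneg he 0 1 B1 B2
      rw [hbco]
      push_cast at h ⊢
      linear_combination h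
    by_cases hD2 : A1 * (B1 + d*B2) - A2 * (-(e*B2)) ≠ 0
    · exact mainaux d e hdneg he a b x0 y0 hx0 hy0 hab1 A1 A2 haco
        (omg d) 0 1 (by simp) honeω (-(e*B2)) (B1 + d*B2) hωb hD2
    · exfalso
      push_neg at hD1 hD2
      set N : ℤ := B1 * (B1 + d*B2) - B2 * (-(e*B2)) with hN
      have h5 : A1 * N = 0 := by linear_combination B1 * hD2 - (-(e*B2)) * hD1
      have h6 : A2 * N = 0 := by linear_combination B2 * hD2 - (B1 + d*B2) * hD1
      have hBne : ¬(B1 = 0 ∧ B2 = 0) := by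
        rintro ⟨h1, h2⟩
        exact hb0 (by rw [hbco, h1, h2]; simp)
      have hNne : N ≠ 0 := by
        intro hN0
        apply hBne
        have key : (2*B1 + d*B2)^2 + (-d)*B2^2 = 0 := by
          rw [hN] at hN0
          linear_combination 4 * hN0 + B2^2 * he
        have hB2 : B2 = 0 := by nlinarith [sq_nonneg (2*B1 + d*B2), sq_nonneg B2]
        rw [hB2] at key
        have key2 : (2*B1)^2 = 0 := by linear_combination key
        have hB1 : 2*B1 = 0 := by
          exact pow_eq_zero_iff (n := 2) (by norm_num) |>.mp key2
        exact ⟨by omega, hB2⟩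
      have hAne : ¬(A1 = 0 ∧ A2 = 0) := by
        rintro ⟨h1, h2⟩
        exact ha0 (by rw [haco, h1, h2]; simp)
      apply hAne
      constructor
      · exact (mul_eq_zero.mp h5).resolve_right hNne
      · exact (mul_eq_zero.mp h6).resolve_right hNne
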